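/- Let d ≥ 1, λ ≥ 1 be integers and r > 0. If X₁, …, X_λ are independent and each uniformly distributed on the closed Euclidean ball B(0,r) ⊂ ℝ^d, then E[min_{1 ≤ i ≤ λ} ‖X_i‖²] = r² · Γ(1 + 2/d) · Γ(λ+1) / Γ(λ + 1 + 2/d). -/

import Mathlib

open MeasureTheory Real Filter

noncomputable def unifBall (d : ℕ) (r : ℝ) : Measure (EuclideanSpace ℝ (Fin d)) :=
  (volume (Metric.closedBall (0 : EuclideanSpace ℝ (Fin d)) r))⁻¹ •
    volume.restrict (Metric.closedBall (0 : EuclideanSpace ℝ (Fin d)) r)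

namespace Stmt4Aux

open Set

variable {d : ℕ} {r : ℝ}

lemma realBeta (a b : ℝ) (ha : 0 < a) (hb : 0 < b) :
    Real.Gamma a * Real.Gamma b
      = Real.Gamma (a + b) * ∫ t in (0:ℝ)..1, t ^ (a-1) * (1-t) ^ (b-1) := by
  have key := Complex.Gamma_mul_Gamma_eq_betaIntegral (s := (a:ℂ)) (t := (b:ℂ))
    (by simpa using ha) (by simpa using hb)
  have hBeta : Complex.betaIntegral a b
      = ((∫ t in (0:ℝ)..1, t ^ (a-1) * (1-t) ^ (b-1) : ℝ) : ℂ) := by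
    rw [Complex.betaIntegral, ← intervalIntegral.integral_ofReal]
    refine intervalIntegral.integral_congr fun x hx => ?_
    rw [Set.uIcc_of_le (by norm_num : (0:ℝ) ≤ 1)] at hx
    rw [Complex.ofReal_mul, Complex.ofReal_cpow hx.1,
      Complex.ofReal_cpow (by linarith [hx.2] : (0:ℝ) ≤ 1 - x)]
    push_cast
    ring
  rw [hBeta, ← Complex.ofReal_add, Complex.Gamma_ofReal, Complex.Gamma_ofReal,
    Complex.Gamma_ofReal, ← Complex.ofReal_mul, ← Complex.ofReal_mul] at key
  exact_mod_cast key

lemma vol_ne_zero (hr : 0 < r) :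
    volume (Metric.closedBall (0 : EuclideanSpace ℝ (Fin d)) r) ≠ 0 :=
  (Metric.measure_closedBall_pos _ _ hr).ne'

lemma vol_ne_top :
    volume (Metric.closedBall (0 : EuclideanSpace ℝ (Fin d)) r) ≠ ⊤ :=
  (measure_closedBall_lt_top).ne

lemma unifBall_prob (hr : 0 < r) : IsProbabilityMeasure (unifBall d r) := by
  constructor
  rw [unifBall, Measure.smul_apply, Measure.restrict_apply MeasurableSet.univ, Set.univ_inter,
    smul_eq_mul, ENNReal.inv_mul_cancel (vol_ne_zero hr) vol_ne_top]

lemma unifBall_apply (A : Set (EuclideanSpace ℝ (Fin d))) (hA : MeasurableSet A) :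
    unifBall d r A = (volume (Metric.closedBall (0 : EuclideanSpace ℝ (Fin d)) r))⁻¹
      * volume (A ∩ Metric.closedBall (0 : EuclideanSpace ℝ (Fin d)) r) := by
  rw [unifBall, Measure.smul_apply, Measure.restrict_apply hA, smul_eq_mul]

lemma unifBall_closedBall_self (hr : 0 < r) :
    unifBall d r (Metric.closedBall (0 : EuclideanSpace ℝ (Fin d)) r) = 1 := by
  rw [unifBall_apply _ measurableSet_closedBall, Set.inter_self,
    ENNReal.inv_mul_cancel (vol_ne_zero hr) vol_ne_top]

lemma unifBall_ball (hd : 1 ≤ d) (hr : 0 < r) {s : ℝ} (hs : 0 < s) (hsr : s ≤ r) :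
    unifBall d r (Metric.ball (0 : EuclideanSpace ℝ (Fin d)) s)
      = ENNReal.ofReal ((s / r) ^ (d:ℝ)) := by
  haveI : Nontrivial (EuclideanSpace ℝ (Fin d)) := by
    apply Module.nontrivial_of_finrank_pos (R := ℝ)
    rw [finrank_euclideanSpace_fin]; omega
  have hc0 : volume (Metric.ball (0 : EuclideanSpace ℝ (Fin d)) 1) ≠ 0 :=
    (Metric.measure_ball_pos _ _ one_pos).ne'
  have hctop : volume (Metric.ball (0 : EuclideanSpace ℝ (Fin d)) 1) ≠ ⊤ :=
    (measure_ball_lt_top).ne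
  rw [unifBall_apply _ Metric.isOpen_ball.measurableSet,
    Set.inter_eq_self_of_subset_left (Metric.ball_subset_closedBall.trans
      (Metric.closedBall_subset_closedBall hsr)),
    Measure.addHaar_closedBall _ 0 hr.le, Measure.addHaar_ball _ 0 hs.le,
    finrank_euclideanSpace_fin]
  rw [ENNReal.mul_inv (Or.inl (by positivity)) (Or.inl ENNReal.ofReal_ne_top)]
  have : (ENNReal.ofReal (r ^ d))⁻¹ * (volume (Metric.ball (0 : EuclideanSpace ℝ (Fin d)) 1))⁻¹
      * (ENNReal.ofReal (s ^ d) * volume (Metric.ball (0 : EuclideanSpace ℝ (Fin d)) 1))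
      = ENNReal.ofReal (s ^ d) * (ENNReal.ofReal (r ^ d))⁻¹
        * ((volume (Metric.ball (0 : EuclideanSpace ℝ (Fin d)) 1))⁻¹
          * volume (Metric.ball (0 : EuclideanSpace ℝ (Fin d)) 1)) := by ring
  rw [this, ENNReal.inv_mul_cancel hc0 hctop, mul_one]
  rw [← ENNReal.ofReal_inv_of_pos (by positivity), ← ENNReal.ofReal_mul (by positivity),
    Real.rpow_natCast, div_pow]
  congr 1

lemma unifBall_surv (hd : 1 ≤ d) (hr : 0 < r) {t : ℝ} (ht : 0 < t) :
    unifBall d r {y : EuclideanSpace ℝ (Fin d) | t ≤ ‖y‖ ^ 2}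
      = ENNReal.ofReal (max 0 (1 - (Real.sqrt t / r) ^ (d:ℝ))) := by
  haveI := unifBall_prob (d := d) hr
  have hs : 0 < Real.sqrt t := Real.sqrt_pos.mpr ht
  have hset : {y : EuclideanSpace ℝ (Fin d) | t ≤ ‖y‖ ^ 2}
      = (Metric.ball (0 : EuclideanSpace ℝ (Fin d)) (Real.sqrt t))ᶜ := by
    ext y
    simp only [Set.mem_setOf_eq, Set.mem_compl_iff, Metric.mem_ball, dist_zero_right, not_lt]
    constructor
    · intro h
      calc Real.sqrt t ≤ Real.sqrt (‖y‖ ^ 2) := Real.sqrt_le_sqrt h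
        _ = ‖y‖ := Real.sqrt_sq (norm_nonneg y)
    · intro h
      have h2 := pow_le_pow_left₀ (Real.sqrt_nonneg t) h 2
      rwa [Real.sq_sqrt ht.le] at h2
  rw [hset, measure_compl Metric.isOpen_ball.measurableSet (measure_ne_top _ _),
    measure_univ]
  rcases le_or_gt (Real.sqrt t) r with hsr | hsr
  · rw [unifBall_ball hd hr hs hsr]
    have hq0 : 0 ≤ (Real.sqrt t / r) ^ (d:ℝ) := by positivity
    have hq1 : (Real.sqrt t / r) ^ (d:ℝ) ≤ 1 := by
      apply Real.rpow_le_one (by positivity) (by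
        rw [div_le_one hr]; exact hsr) (by positivity)
    rw [← ENNReal.ofReal_one, ← ENNReal.ofReal_sub _ hq0, max_eq_right (by linarith)]
  · have hq1 : (1:ℝ) < (Real.sqrt t / r) ^ (d:ℝ) := by
      refine (Real.one_lt_rpow_iff_of_pos (by positivity)).mpr (Or.inl ⟨?_, by positivity⟩)
      rw [lt_div_iff₀ hr]; linarith
    have hball : unifBall d r (Metric.ball (0 : EuclideanSpace ℝ (Fin d)) (Real.sqrt t)) = 1 := by
      refine le_antisymm prob_le_one ?_
      rw [← unifBall_closedBall_self hr]
      exact measure_mono (Metric.closedBall_subset_ball hsr)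
    rw [hball, tsub_self, max_eq_left (by linarith), ENNReal.ofReal_zero]

lemma keyInt (d lam : ℕ) (hd : 1 ≤ d) (hlam : 1 ≤ lam) (r : ℝ) (hr : 0 < r) :
    ∫ t in Ioi (0:ℝ), (max 0 (1 - (Real.sqrt t / r) ^ (d:ℝ))) ^ lam
      = r ^ 2 * Real.Gamma (1 + 2 / d) * Real.Gamma (lam + 1) / Real.Gamma (lam + 1 + 2 / d) := by
  have hd0 : (0:ℝ) < d := by exact_mod_cast hd
  set p : ℝ := 2 / d with hp_def
  have hp : 0 < p := by positivity
  set c : ℝ := r ^ (d:ℝ) with hc_def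
  have hc : 0 < c := by positivity
  have h1 := integral_comp_rpow_Ioi_of_pos
    (g := fun t => (max 0 (1 - (Real.sqrt t / r) ^ (d:ℝ))) ^ lam) hp
  rw [← h1]
  have h2 : ∀ x ∈ Ioi (0:ℝ), (p * x ^ (p-1)) •
        ((max 0 (1 - (Real.sqrt (x ^ p) / r) ^ (d:ℝ))) ^ lam : ℝ)
      = p * x ^ (p-1) * (max 0 (1 - x / c)) ^ lam := by
    intro x hx
    have hx0 : (0:ℝ) < x := hx
    have hsq : (Real.sqrt (x ^ p) / r) ^ (d:ℝ) = x / c := by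
      rw [Real.div_rpow (Real.sqrt_nonneg _) hr.le]
      congr 1
      rw [Real.sqrt_eq_rpow, ← Real.rpow_mul hx0.le, ← Real.rpow_mul hx0.le,
        show p * (1/2) * (d:ℝ) = 1 by rw [hp_def]; field_simp, Real.rpow_one]
    rw [hsq, smul_eq_mul]
  rw [setIntegral_congr_fun measurableSet_Ioi h2]
  have h3 := integral_comp_mul_left_Ioi
    (fun x => p * x ^ (p-1) * (max 0 (1 - x / c)) ^ lam) 0 hc
  rw [mul_zero] at h3
  have h3' : (∫ x in Ioi (0:ℝ), p * x ^ (p-1) * (max 0 (1 - x / c)) ^ lam)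
      = c • ∫ x in Ioi (0:ℝ), p * (c * x) ^ (p-1) * (max 0 (1 - (c * x) / c)) ^ lam := by
    rw [h3, smul_smul, mul_inv_cancel₀ hc.ne', one_smul]
  rw [h3']
  have h4 : ∀ x ∈ Ioi (0:ℝ), p * (c * x) ^ (p-1) * (max 0 (1 - (c * x) / c)) ^ lam
      = c ^ (p-1) * (p * x ^ (p-1) * (max 0 (1 - x)) ^ lam) := by
    intro x hx
    have hx0 : (0:ℝ) < x := hx
    rw [Real.mul_rpow hc.le hx0.le, mul_div_cancel_left₀ _ hc.ne']
    ring
  rw [setIntegral_congr_fun measurableSet_Ioi h4, integral_const_mul, smul_eq_mul, ← mul_assoc]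
  have h5 : c * c ^ (p - 1) = r ^ 2 := by
    have e1 : c * c ^ (p - 1) = c ^ p := by
      nth_rewrite 1 [show c = c ^ (1:ℝ) from (Real.rpow_one c).symm]
      rw [← Real.rpow_add hc]; ring_nf
    rw [e1, hc_def, ← Real.rpow_mul hr.le,
      show (d:ℝ) * p = 2 by rw [hp_def]; field_simp,
      show (2:ℝ) = ((2:ℕ):ℝ) by norm_num, Real.rpow_natCast]
  rw [h5]
  have h6 : (∫ x in Ioi (0:ℝ), p * x ^ (p-1) * (max 0 (1 - x)) ^ lam)
      = ∫ x in Ioc (0:ℝ) 1, p * x ^ (p-1) * (max 0 (1 - x)) ^ lam := by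
    rw [setIntegral_eq_of_subset_of_ae_diff_eq_zero nullMeasurableSet_Ioi Ioc_subset_Ioi_self]
    refine Eventually.of_forall fun x hx => ?_
    have hx1 : (1:ℝ) < x := by
      simp only [mem_diff, mem_Ioi, mem_Ioc, not_and, not_le] at hx
      exact hx.2 hx.1
    rw [max_eq_left (by linarith), zero_pow (by omega), mul_zero]
  rw [h6]
  have h7 : ∀ x ∈ Ioc (0:ℝ) 1, p * x ^ (p-1) * (max 0 (1 - x)) ^ lam
      = p * (x ^ (p-1) * (1 - x) ^ (((lam:ℝ) + 1) - 1)) := by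
    intro x hx
    rw [max_eq_right (by linarith [hx.2]), add_sub_cancel_right, Real.rpow_natCast]
    ring
  rw [setIntegral_congr_fun measurableSet_Ioc h7, integral_const_mul,
    ← intervalIntegral.integral_of_le zero_le_one]
  have hB := realBeta p ((lam:ℝ) + 1) hp (by positivity)
  have hΓpos : 0 < Real.Gamma (p + ((lam:ℝ) + 1)) := Real.Gamma_pos_of_pos (by positivity)
  have hBval : (∫ t in (0:ℝ)..1, t ^ (p-1) * (1-t) ^ (((lam:ℝ)+1)-1))
      = Real.Gamma p * Real.Gamma ((lam:ℝ)+1) / Real.Gamma (p + ((lam:ℝ)+1)) := by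
    rw [hB, mul_div_cancel_left₀ _ hΓpos.ne']
  rw [hBval]
  have hΓ1 : p * Real.Gamma p = Real.Gamma (1 + p) := by
    rw [add_comm, Real.Gamma_add_one hp.ne']
  have heq : (lam:ℝ) + 1 + p = p + ((lam:ℝ) + 1) := by ring
  rw [heq, ← hΓ1]
  ring

end Stmt4Aux

open Stmt4Aux Set

theorem stmt_4 (d lam : ℕ) (hd : 1 ≤ d) (hlam : 1 ≤ lam) (r : ℝ) (hr : 0 < r) :
    ∫ x : Fin lam → EuclideanSpace ℝ (Fin d), (⨅ i, ‖x i‖ ^ 2)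
        ∂(Measure.pi fun _ : Fin lam => unifBall d r)
      = r ^ 2 * Real.Gamma (1 + 2 / d) * Real.Gamma (lam + 1) / Real.Gamma (lam + 1 + 2 / d) := by
  haveI hP : IsProbabilityMeasure (unifBall d r) := unifBall_prob hr
  haveI : Nonempty (Fin lam) := ⟨⟨0, hlam⟩⟩
  set Pm := Measure.pi fun _ : Fin lam => unifBall d r with hPm
  haveI : IsProbabilityMeasure Pm := by rw [hPm]; infer_instance
  have hgm : Measurable fun x : Fin lam → EuclideanSpace ℝ (Fin d) => ⨅ i, ‖x i‖ ^ 2 :=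
    Measurable.iInf fun i => ((measurable_pi_apply i).norm.pow_const 2)
  have hbdd : ∀ x : Fin lam → EuclideanSpace ℝ (Fin d),
      BddBelow (Set.range fun i => ‖x i‖ ^ 2) :=
    fun x => Set.Finite.bddBelow (Set.finite_range _)
  have hg0 : ∀ x : Fin lam → EuclideanSpace ℝ (Fin d), 0 ≤ ⨅ i, ‖x i‖ ^ 2 :=
    fun x => le_ciInf fun i => by positivity
  set S : Set (Fin lam → EuclideanSpace ℝ (Fin d)) :=
    Set.univ.pi fun _ => Metric.closedBall (0 : EuclideanSpace ℝ (Fin d)) r with hSdef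
  have hS : MeasurableSet S := MeasurableSet.univ_pi fun _ => measurableSet_closedBall
  have hae : ∀ᵐ x ∂Pm, x ∈ S := by
    rw [ae_iff]
    have hc : Pm Sᶜ = 0 := by
      rw [measure_compl hS (measure_ne_top _ _), measure_univ, hSdef, hPm, Measure.pi_pi]
      simp [unifBall_closedBall_self hr]
    exact hc
  have hint : Integrable (fun x : Fin lam → EuclideanSpace ℝ (Fin d) => ⨅ i, ‖x i‖ ^ 2) Pm := by
    refine Integrable.mono' (integrable_const (r ^ 2)) hgm.aestronglyMeasurable ?_
    filter_upwards [hae] with x hx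
    rw [Real.norm_eq_abs, abs_of_nonneg (hg0 x)]
    refine (ciInf_le (hbdd x) ⟨0, hlam⟩).trans ?_
    have hmem : ‖x ⟨0, hlam⟩‖ ≤ r := by
      have := hx ⟨0, hlam⟩ (Set.mem_univ _)
      simpa [Metric.mem_closedBall, dist_zero_right] using this
    exact pow_le_pow_left₀ (norm_nonneg _) hmem 2
  rw [hint.integral_eq_integral_meas_le (Eventually.of_forall hg0)]
  have hFt : ∀ t ∈ Ioi (0:ℝ),
      (Pm {x : Fin lam → EuclideanSpace ℝ (Fin d) | t ≤ ⨅ i, ‖x i‖ ^ 2}).toReal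
      = (max 0 (1 - (Real.sqrt t / r) ^ (d:ℝ))) ^ lam := by
    intro t ht
    have hset : {x : Fin lam → EuclideanSpace ℝ (Fin d) | t ≤ ⨅ i, ‖x i‖ ^ 2}
        = Set.univ.pi fun _ : Fin lam => {y : EuclideanSpace ℝ (Fin d) | t ≤ ‖y‖ ^ 2} := by
      ext x
      simp only [Set.mem_setOf_eq, Set.mem_univ_pi]
      exact le_ciInf_iff (hbdd x)
    rw [hset, hPm, Measure.pi_pi]
    simp only [unifBall_surv hd hr ht]
    rw [Finset.prod_const, Finset.card_univ, Fintype.card_fin,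
      ← ENNReal.ofReal_pow (le_max_left _ _),
      ENNReal.toReal_ofReal (pow_nonneg (le_max_left _ _) _)]
  simp only [Measure.real]
  rw [setIntegral_congr_fun measurableSet_Ioi hFt]
  exact keyInt d lam hd hlam r hr
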